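/- Define for vectors x_1,...,x_A ∈ R^d and scalars y_1,...,y_A the truncated log-probability g_{k,η₁}(x,y) = log(max{P_{z∼N(0,I_d)}(⟨x_k - x_j, z⟩ + y_k - y_j ≥ 0 for all j ∈ [A]), η₁}). On the region where ||x_i - x_j||_2 ≥ η for all i ≠ j, g_{k,η₁} is Lipschitz in each scalar argument y_j (j ≠ k) with |g_{k,η₁}(...,y_j,...) - g_{k,η₁}(...,y_j',...)| ≤ 2|y_j - y_j'|/(η·η₁). -/

import Mathlib

open MeasureTheory ProbabilityTheory Real
open scoped NNReal ENNReal

/-- The Euclidean norm of a vector in `Fin d → ℝ`. -/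
noncomputable def l2norm {d : ℕ} (v : Fin d → ℝ) : ℝ := Real.sqrt (∑ i, v i ^ 2)

/-- The truncated log-probability
`g_{k,η₁}(x, y) = log (max (P_{z∼N(0,I_d)}(⟨x_k - x_j, z⟩ + y_k - y_j ≥ 0 ∀ j), η₁))`. -/
noncomputable def truncLogProb {d A : ℕ} (η₁ : ℝ) (x : Fin A → (Fin d → ℝ))
    (y : Fin A → ℝ) (k : Fin A) : ℝ :=
  Real.log (max
    (((Measure.pi (fun _ : Fin d => gaussianReal 0 1))
        {z | ∀ j, 0 ≤ (∑ i, (x k i - x j i) * z i) + y k - y j}).toReal) η₁)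

lemma gaussianPDFReal_conv {a b : ℝ≥0} (ha : a ≠ 0) (hb : b ≠ 0) (s : ℝ) :
    ∫ x, gaussianPDFReal 0 a x * gaussianPDFReal 0 b (s - x) = gaussianPDFReal 0 (a + b) s := by
  have hA : (0:ℝ) < a := lt_of_le_of_ne a.coe_nonneg (by exact_mod_cast (Ne.symm ha))
  have hB : (0:ℝ) < b := lt_of_le_of_ne b.coe_nonneg (by exact_mod_cast (Ne.symm hb))
  set A : ℝ := (a:ℝ) with hAdef
  set B : ℝ := (b:ℝ) with hBdef
  have hAB : (0:ℝ) < A + B := by linarith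
  set c : ℝ := (A + B) / (2 * A * B) with hc
  have hcpos : 0 < c := by positivity
  set m : ℝ := A * s / (A + B) with hm
  have key : ∀ x : ℝ, gaussianPDFReal 0 a x * gaussianPDFReal 0 b (s - x)
      = ((√(2 * π * A))⁻¹ * (√(2 * π * B))⁻¹ * rexp (- s ^ 2 / (2 * (A + B))))
        * rexp (- (c * (x - m) ^ 2)) := by
    intro x
    simp only [gaussianPDFReal, sub_zero]
    have hexp : -x ^ 2 / (2 * A) + -(s - x) ^ 2 / (2 * B)
        = -s ^ 2 / (2 * (A + B)) + -(c * (x - m) ^ 2) := by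
      rw [hc, hm]
      field_simp
      ring
    calc (√(2 * π * (a:ℝ)))⁻¹ * rexp (-x ^ 2 / (2 * (a:ℝ)))
          * ((√(2 * π * (b:ℝ)))⁻¹ * rexp (-(s - x) ^ 2 / (2 * (b:ℝ))))
        = ((√(2 * π * A))⁻¹ * (√(2 * π * B))⁻¹)
            * rexp (-x ^ 2 / (2 * A) + -(s - x) ^ 2 / (2 * B)) := by
          rw [Real.exp_add]; ring
      _ = ((√(2 * π * A))⁻¹ * (√(2 * π * B))⁻¹ * rexp (-s ^ 2 / (2 * (A + B))))
            * rexp (-(c * (x - m) ^ 2)) := by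
          rw [hexp, Real.exp_add]; ring
  rw [funext fun x => key x]
  rw [integral_const_mul]
  have hshift : ∫ x : ℝ, rexp (-(c * (x - m) ^ 2)) = ∫ x : ℝ, rexp (-(c * x ^ 2)) :=
    integral_sub_right_eq_self (fun x => rexp (-(c * x ^ 2))) m
  have hg : ∫ x : ℝ, rexp (-(c * x ^ 2)) = √(π / c) := by
    simpa using integral_gaussian c
  rw [hshift, hg]
  -- now the constants
  have h1 : (√(2 * π * A))⁻¹ * (√(2 * π * B))⁻¹ * √(π / c) = (√(2 * π * (A + B)))⁻¹ := by
    rw [← Real.sqrt_inv, ← Real.sqrt_inv, ← Real.sqrt_mul (by positivity),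
      ← Real.sqrt_mul (by positivity), ← Real.sqrt_inv]
    congr 1
    rw [hc]
    field_simp
  have : gaussianPDFReal 0 (a + b) s = (√(2 * π * (A + B)))⁻¹ * rexp (- s ^ 2 / (2 * (A + B))) := by
    simp only [gaussianPDFReal, sub_zero, NNReal.coe_add, hAdef, hBdef]
  rw [this, ← h1]
  ring

lemma gaussianReal_conv (a b : ℝ≥0) :
    Measure.map (fun p : ℝ × ℝ => p.1 + p.2) ((gaussianReal 0 a).prod (gaussianReal 0 b))
      = gaussianReal 0 (a + b) := by
  by_cases ha : a = 0
  · subst ha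
    rw [zero_add, gaussianReal_zero_var, Measure.dirac_prod, Measure.map_map (by fun_prop) (by fun_prop)]
    simp [Function.comp_def]
  by_cases hb : b = 0
  · subst hb
    rw [add_zero, gaussianReal_zero_var, Measure.prod_dirac, Measure.map_map (by fun_prop) (by fun_prop)]
    simp [Function.comp_def]
  -- main case
  have hab : a + b ≠ 0 := by positivity
  have hmeas : Measurable (fun p : ℝ × ℝ => p.1 + p.2) := by fun_prop
  haveI : IsProbabilityMeasure (((gaussianReal 0 a).prod (gaussianReal 0 b)).map
      (fun p : ℝ × ℝ => p.1 + p.2)) := Measure.isProbabilityMeasure_map hmeas.aemeasurable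
  refine Measure.ext_of_Iic _ _ (fun t => ?_)
  rw [Measure.map_apply hmeas measurableSet_Iic]
  have hsetm : MeasurableSet ((fun p : ℝ × ℝ => p.1 + p.2) ⁻¹' Set.Iic t) :=
    hmeas measurableSet_Iic
  rw [Measure.prod_apply hsetm]
  have hpre : ∀ x : ℝ, (Prod.mk x ⁻¹' ((fun p : ℝ × ℝ => p.1 + p.2) ⁻¹' Set.Iic t))
      = Set.Iic (t - x) := by
    intro x; ext z; simp [Set.mem_Iic]; constructor <;> intro h <;> linarith
  rw [gaussianReal_of_var_ne_zero 0 ha]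
  rw [lintegral_withDensity_eq_lintegral_mul _ (measurable_gaussianPDF 0 a)
    (measurable_measure_prodMk_left hsetm)]
  simp_rw [Pi.mul_apply, hpre]
  -- convert to real integrals
  have hfa := integrable_gaussianPDFReal 0 a
  have hfb := integrable_gaussianPDFReal 0 b
  set fa := gaussianPDFReal 0 a with hfa_def
  set fb := gaussianPDFReal 0 b with hfb_def
  have hFmono : Monotone (fun r : ℝ => ∫ y in Set.Iic r, fb y) := by
    intro r r' hrr'
    exact setIntegral_mono_set hfb.restrict (ae_of_all _ (gaussianPDFReal_nonneg 0 b))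
      (HasSubset.Subset.eventuallyLE (Set.Iic_subset_Iic.mpr hrr'))
  have hGmeas : Measurable (fun x : ℝ => ∫ y in Set.Iic (t - x), fb y) :=
    hFmono.measurable.comp (measurable_const.sub measurable_id)
  have hGnonneg : ∀ x, 0 ≤ ∫ y in Set.Iic (t - x), fb y := fun x =>
    setIntegral_nonneg measurableSet_Iic (fun y _ => gaussianPDFReal_nonneg 0 b y)
  have hGle : ∀ x, (∫ y in Set.Iic (t - x), fb y) ≤ 1 := by
    intro x
    calc (∫ y in Set.Iic (t - x), fb y) ≤ ∫ y, fb y :=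
      setIntegral_le_integral hfb (ae_of_all _ (gaussianPDFReal_nonneg 0 b))
    _ = 1 := integral_gaussianPDFReal_eq_one 0 hb
  have hH : Integrable (fun x => fa x * ∫ y in Set.Iic (t - x), fb y) := by
    refine hfa.mono ((measurable_gaussianPDFReal 0 a).mul hGmeas).aestronglyMeasurable
      (ae_of_all _ fun x => ?_)
    rw [norm_mul, Real.norm_eq_abs, Real.norm_eq_abs,
      abs_of_nonneg (gaussianPDFReal_nonneg 0 a x), abs_of_nonneg (hGnonneg x)]
    calc fa x * ∫ y in Set.Iic (t - x), fb y ≤ fa x * 1 :=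
      mul_le_mul_of_nonneg_left (hGle x) (gaussianPDFReal_nonneg 0 a x)
    _ = fa x := mul_one _
  calc ∫⁻ x, gaussianPDF 0 a x * gaussianReal 0 b (Set.Iic (t - x))
      = ∫⁻ x, ENNReal.ofReal (fa x * ∫ y in Set.Iic (t - x), fb y) := by
        congr 1 with x
        rw [gaussianReal_apply_eq_integral 0 hb, gaussianPDF,
          ← ENNReal.ofReal_mul (gaussianPDFReal_nonneg 0 a x)]
    _ = ENNReal.ofReal (∫ x, fa x * ∫ y in Set.Iic (t - x), fb y) := by
        rw [← ofReal_integral_eq_lintegral_ofReal hH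
          (ae_of_all _ fun x => mul_nonneg (gaussianPDFReal_nonneg 0 a x) (hGnonneg x))]
    _ = gaussianReal 0 (a + b) (Set.Iic t) := by
        rw [gaussianReal_apply_eq_integral 0 hab]
        congr 1
        -- inner substitution
        have hinner : ∀ x : ℝ, (∫ y in Set.Iic (t - x), fb y)
            = ∫ s in Set.Iic t, fb (s - x) := by
          intro x
          rw [← integral_indicator measurableSet_Iic, ← integral_indicator measurableSet_Iic]
          calc (∫ y, (Set.Iic (t - x)).indicator fb y)
              = ∫ s, (Set.Iic (t - x)).indicator fb (s - x) :=
                (integral_sub_right_eq_self ((Set.Iic (t - x)).indicator fb) x).symm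
            _ = ∫ s, (Set.Iic t).indicator (fun s' => fb (s' - x)) s := by
                congr 1 with s
                by_cases hs : s ≤ t
                · rw [Set.indicator_of_mem (by simpa using hs),
                    Set.indicator_of_mem (by simp [Set.mem_Iic]; linarith)]
                · rw [Set.indicator_of_notMem (by simpa using hs),
                    Set.indicator_of_notMem (by simp [Set.mem_Iic]; linarith)]
        simp_rw [hinner, ← integral_const_mul]
        -- Fubini swap
        have hprod : Integrable (fun p : ℝ × ℝ => fa p.1 * fb (p.2 - p.1))
            (volume.prod volume) := by
          have h0 : Integrable (fun p : ℝ × ℝ => fa p.1 * fb p.2) (volume.prod volume) :=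
            hfa.mul_prod hfb
          have hmp := measurePreserving_prod_sub (volume : Measure ℝ) volume
          have hemb : MeasurableEmbedding (fun z : ℝ × ℝ => (z.1, z.2 - z.1)) :=
            (MeasurableEquiv.shearSubRight ℝ).measurableEmbedding
          exact (hmp.integrable_comp_emb hemb).mpr h0
        have hswap := integral_integral_swap
          (f := fun (x s : ℝ) => fa x * fb (s - x))
          (μ := (volume : Measure ℝ)) (ν := volume.restrict (Set.Iic t)) ?_
        · rw [hswap]
          refine setIntegral_congr_fun measurableSet_Iic (fun s _ => ?_)
          exact gaussianPDFReal_conv ha hb s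
        · have : (volume : Measure ℝ).prod (volume.restrict (Set.Iic t))
              = ((volume : Measure ℝ).prod volume).restrict (Set.univ ×ˢ Set.Iic t) := by
            rw [← Measure.prod_restrict, Measure.restrict_univ]
          rw [Function.uncurry_def, this]
          exact hprod.restrict

lemma pi_gaussian_map_sum : ∀ (d : ℕ) (v : Fin d → ℝ),
    Measure.map (fun z : Fin d → ℝ => ∑ i, v i * z i)
        (Measure.pi fun _ => gaussianReal 0 1)
      = gaussianReal 0 (∑ i, (⟨v i ^ 2, sq_nonneg _⟩ : ℝ≥0)) := by
  intro d
  induction d with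
  | zero =>
      intro v
      simp only [Finset.univ_eq_empty, Finset.sum_empty]
      rw [Measure.map_const]
      simp
      exact (gaussianReal_zero_var 0).symm
  | succ n ih =>
      intro v
      have hmp := measurePreserving_piFinSuccAbove (fun _ : Fin (n + 1) => gaussianReal 0 1) 0
      set e := MeasurableEquiv.piFinSuccAbove (fun _ : Fin (n + 1) => ℝ) 0 with he
      have hsum_meas : Measurable (fun z : Fin (n + 1) → ℝ => ∑ i, v i * z i) := by fun_prop
      have hpi : (Measure.pi fun _ : Fin (n + 1) => gaussianReal 0 1)
          = Measure.map e.symm (((gaussianReal 0 1)).prod (Measure.pi fun _ : Fin n => gaussianReal 0 1)) := by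
        rw [← hmp.map_eq, Measure.map_map e.symm.measurable e.measurable,
          MeasurableEquiv.symm_comp_self, Measure.map_id]
      rw [hpi, Measure.map_map hsum_meas e.symm.measurable]
      have hfun : ((fun z : Fin (n + 1) → ℝ => ∑ i, v i * z i) ∘ e.symm)
          = fun p : ℝ × (Fin n → ℝ) => v 0 * p.1 + ∑ i : Fin n, v i.succ * p.2 i := by
        ext p
        have h0 : e (e.symm p) = p := e.apply_symm_apply p
        have h0' : (e.symm p) 0 = p.1 := by
          have := congrArg Prod.fst h0
          simpa [e, MeasurableEquiv.piFinSuccAbove] using this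
        have hs : ∀ i : Fin n, (e.symm p) i.succ = p.2 i := by
          intro i
          have := congrArg (fun q => q.2 i) h0
          simpa [e, MeasurableEquiv.piFinSuccAbove, Fin.succAbove] using this
        simp only [Function.comp_apply, Fin.sum_univ_succ, h0', hs]
      rw [hfun]
      have hcomp : (fun p : ℝ × (Fin n → ℝ) => v 0 * p.1 + ∑ i : Fin n, v i.succ * p.2 i)
          = (fun q : ℝ × ℝ => q.1 + q.2) ∘
            (Prod.map (fun x : ℝ => v 0 * x) (fun w : Fin n → ℝ => ∑ i : Fin n, v i.succ * w i)) := by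
        ext p; rfl
      rw [hcomp, ← Measure.map_map (by fun_prop) (by fun_prop)]
      rw [← Measure.map_prod_map _ _ (by fun_prop) (by fun_prop)]
      rw [ih (fun i => v i.succ)]
      have hmul : (gaussianReal 0 1).map (fun x : ℝ => v 0 * x)
          = gaussianReal 0 ⟨v 0 ^ 2, sq_nonneg _⟩ := by
        have := gaussianReal_map_const_mul (μ := 0) (v := 1) (v 0)
        simp at this
        exact this
      rw [hmul]
      refine (gaussianReal_conv _ _).trans ?_
      congr 1
      exact (Fin.sum_univ_succ (fun i => (⟨v i ^ 2, sq_nonneg _⟩ : ℝ≥0))).symm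

lemma gaussianReal_Ico_le {V : ℝ≥0} (hV : V ≠ 0) (α β : ℝ) :
    gaussianReal 0 V (Set.Ico α β) ≤ ENNReal.ofReal ((β - α) * (√(V : ℝ))⁻¹) := by
  have hVpos : (0:ℝ) < V := lt_of_le_of_ne V.coe_nonneg (by exact_mod_cast (Ne.symm hV))
  have hpdf : ∀ x, gaussianPDF 0 V x ≤ ENNReal.ofReal (√(V:ℝ))⁻¹ := by
    intro x
    rw [gaussianPDF]
    apply ENNReal.ofReal_le_ofReal
    rw [gaussianPDFReal]
    calc (√(2 * π * V))⁻¹ * rexp (-(x - 0) ^ 2 / (2 * V))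
        ≤ (√(2 * π * V))⁻¹ * 1 := by
          apply mul_le_mul_of_nonneg_left _ (by positivity)
          rw [Real.exp_le_one_iff]
          apply div_nonpos_of_nonpos_of_nonneg (neg_nonpos.mpr (sq_nonneg _)) (by positivity)
      _ = (√(2 * π * V))⁻¹ := mul_one _
      _ ≤ (√(V:ℝ))⁻¹ := by
          apply inv_anti₀ (Real.sqrt_pos.mpr hVpos)
          apply Real.sqrt_le_sqrt
          nlinarith [Real.pi_gt_three]
  calc gaussianReal 0 V (Set.Ico α β) = ∫⁻ x in Set.Ico α β, gaussianPDF 0 V x :=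
        gaussianReal_apply 0 hV _
    _ ≤ ∫⁻ _ in Set.Ico α β, ENNReal.ofReal (√(V:ℝ))⁻¹ :=
        setLIntegral_mono (by fun_prop) (fun x _ => hpdf x)
    _ = ENNReal.ofReal (√(V:ℝ))⁻¹ * volume (Set.Ico α β) := setLIntegral_const _ _
    _ ≤ ENNReal.ofReal ((β - α) * (√(V:ℝ))⁻¹) := by
        rw [Real.volume_Ico, ← ENNReal.ofReal_mul (by positivity)]
        apply ENNReal.ofReal_le_ofReal
        rw [mul_comm]

lemma log_max_lip {η₁ : ℝ} (hη₁ : 0 < η₁) (u w : ℝ) :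
    |Real.log (max u η₁) - Real.log (max w η₁)| ≤ |u - w| / η₁ := by
  have key : ∀ p q : ℝ, η₁ ≤ p → η₁ ≤ q → q ≤ p →
      Real.log p - Real.log q ≤ (p - q) / η₁ := by
    intro p q hp hq hqp
    have hq0 : 0 < q := lt_of_lt_of_le hη₁ hq
    have hp0 : 0 < p := lt_of_lt_of_le hη₁ hp
    calc Real.log p - Real.log q = Real.log (p / q) := (Real.log_div hp0.ne' hq0.ne').symm
      _ ≤ p / q - 1 := Real.log_le_sub_one_of_pos (by positivity)
      _ = (p - q) / q := by field_simp
      _ ≤ (p - q) / η₁ := by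
          apply div_le_div_of_nonneg_left (by linarith) hη₁ hq
  have main : ∀ p q : ℝ, η₁ ≤ p → η₁ ≤ q → |Real.log p - Real.log q| ≤ |p - q| / η₁ := by
    intro p q hp hq
    rcases le_total q p with h | h
    · rw [abs_of_nonneg (sub_nonneg.mpr (Real.log_le_log (by linarith) h)),
        abs_of_nonneg (sub_nonneg.mpr h)]
      exact key p q hp hq h
    · rw [abs_sub_comm, abs_sub_comm p q,
        abs_of_nonneg (sub_nonneg.mpr (Real.log_le_log (by linarith) h)),
        abs_of_nonneg (sub_nonneg.mpr h)]
      exact key q p hq hp h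
  calc |Real.log (max u η₁) - Real.log (max w η₁)|
      ≤ |max u η₁ - max w η₁| / η₁ := main _ _ (le_max_right _ _) (le_max_right _ _)
    _ ≤ |u - w| / η₁ := (div_le_div_iff_of_pos_right hη₁).mpr (abs_max_sub_max_le_abs u w η₁)

/-- Main theorem. -/
theorem truncLogProb_lipschitz_in_y {d A : ℕ} (η₁ η : ℝ)
    (hη₁ : 0 < η₁) (hη₁1 : η₁ < 1) (hη : 0 < η)
    (x : Fin A → (Fin d → ℝ))
    (hsep : ∀ i j : Fin A, i ≠ j → η ≤ l2norm (fun s => x i s - x j s))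
    (y : Fin A → ℝ) (j k : Fin A) (hjk : j ≠ k) (c : ℝ) :
    |truncLogProb η₁ x y k - truncLogProb η₁ x (Function.update y j c) k| ≤
      2 * |y j - c| / (η * η₁) := by
  classical
  set μ := Measure.pi (fun _ : Fin d => gaussianReal 0 1) with hμ
  haveI : IsProbabilityMeasure μ := by rw [hμ]; infer_instance
  set y' := Function.update y j c with hy'
  have hy'k : y' k = y k := Function.update_of_ne (Ne.symm hjk) c y
  have hy'j : y' j = c := Function.update_self j c y
  have hy'other : ∀ j' : Fin A, j' ≠ j → y' j' = y j' := fun j' h =>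
    Function.update_of_ne h c y
  set S : (Fin A → ℝ) → Set (Fin d → ℝ) :=
    fun w => {z | ∀ j', 0 ≤ (∑ i, (x k i - x j' i) * z i) + w k - w j'} with hS
  set L : (Fin d → ℝ) → ℝ := fun z => ∑ i, (x k i - x j i) * z i with hL
  have hLmeas : Measurable L := by
    apply Finset.measurable_sum
    intro i _
    exact (measurable_pi_apply i).const_mul _
  -- the variance
  set V : ℝ≥0 := ∑ i, (⟨(x k i - x j i) ^ 2, sq_nonneg _⟩ : ℝ≥0) with hV
  have hVcoe : (V : ℝ) = ∑ i, (x k i - x j i) ^ 2 := by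
    rw [hV]; exact NNReal.coe_sum _ _
  have hηV : η ≤ √(V : ℝ) := by
    have := hsep k j (Ne.symm hjk)
    rwa [l2norm, ← hVcoe] at this
  have hVpos : (0:ℝ) < V := Real.sqrt_pos.mp (lt_of_lt_of_le hη hηV)
  have hVne : V ≠ 0 := by
    intro h; rw [h] at hVpos; simp at hVpos
  -- measurability of the events
  have hSmeas : ∀ w : Fin A → ℝ, MeasurableSet (S w) := by
    intro w
    have : S w = ⋂ j', {z : Fin d → ℝ | 0 ≤ (∑ i, (x k i - x j' i) * z i) + w k - w j'} := by
      ext z; simp [hS, Set.mem_iInter]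
    rw [this]
    apply MeasurableSet.iInter
    intro j'
    have hm : Measurable fun z : Fin d → ℝ => (∑ i, (x k i - x j' i) * z i) + w k - w j' := by
      apply Measurable.sub_const
      apply Measurable.add_const
      apply Finset.measurable_sum
      intro i _
      exact (measurable_pi_apply i).const_mul _
    exact measurableSet_le measurable_const hm
  -- the slab
  set m : ℝ := min (y j) c - y k with hm
  set M : ℝ := max (y j) c - y k with hM
  have hMm : M - m = |y j - c| := by
    have h := max_sub_min_eq_abs (y j) c
    rw [hM, hm, abs_sub_comm]; linarith
  set T : Set (Fin d → ℝ) := L ⁻¹' Set.Ico m M with hT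
  have hsub1 : S y \ S y' ⊆ T := by
    rintro z ⟨hz1, hz2⟩
    simp only [hS, Set.mem_setOf_eq, not_forall, not_le] at hz1 hz2
    obtain ⟨j'', hj''⟩ := hz2
    have hj''j : j'' = j := by
      by_contra hne
      rw [hy'k, hy'other j'' hne] at hj''
      exact absurd (hz1 j'') (not_le.mpr hj'')
    rw [hj''j] at hj''
    rw [hy'k, hy'j] at hj''
    have h1 := hz1 j
    constructor
    · calc m ≤ y j - y k := by rw [hm]; have := min_le_left (y j) c; linarith
        _ ≤ L z := by rw [hL]; linarith
    · calc L z < c - y k := by rw [hL]; linarith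
        _ ≤ M := by rw [hM]; have := le_max_right (y j) c; linarith
  have hsub2 : S y' \ S y ⊆ T := by
    rintro z ⟨hz1, hz2⟩
    simp only [hS, Set.mem_setOf_eq, not_forall, not_le] at hz1 hz2
    obtain ⟨j'', hj''⟩ := hz2
    have hj''j : j'' = j := by
      by_contra hne
      have h := hz1 j''
      rw [hy'k, hy'other j'' hne] at h
      exact absurd h (not_le.mpr hj'')
    rw [hj''j] at hj''
    have h1 := hz1 j
    rw [hy'k, hy'j] at h1
    constructor
    · calc m ≤ c - y k := by rw [hm]; have := min_le_right (y j) c; linarith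
        _ ≤ L z := by rw [hL]; linarith
    · calc L z < y j - y k := by rw [hL]; linarith
        _ ≤ M := by rw [hM]; have := le_max_left (y j) c; linarith
  -- bound on the slab measure
  have hTbound : μ T ≤ ENNReal.ofReal (|y j - c| / η) := by
    have hmap : μ T = gaussianReal 0 V (Set.Ico m M) := by
      rw [hT, ← Measure.map_apply hLmeas measurableSet_Ico, hL, hμ,
        pi_gaussian_map_sum d (fun i => x k i - x j i), hV]
    rw [hmap]
    calc gaussianReal 0 V (Set.Ico m M) ≤ ENNReal.ofReal ((M - m) * (√(V : ℝ))⁻¹) :=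
        gaussianReal_Ico_le hVne m M
      _ ≤ ENNReal.ofReal (|y j - c| / η) := by
        apply ENNReal.ofReal_le_ofReal
        rw [hMm, div_eq_mul_inv]
        apply mul_le_mul_of_nonneg_left _ (abs_nonneg _)
        exact inv_anti₀ hη hηV
  have hTreal : (μ T).toReal ≤ |y j - c| / η :=
    ENNReal.toReal_le_of_le_ofReal (by positivity) hTbound
  -- |P - P'| bound
  set P : ℝ := (μ (S y)).toReal with hP
  set P' : ℝ := (μ (S y')).toReal with hP'
  have habs : |P - P'| ≤ |y j - c| / η := by
    have key : ∀ w w' : Fin A → ℝ, S w \ S w' ⊆ T →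
        (μ (S w)).toReal ≤ (μ (S w')).toReal + (μ T).toReal := by
      intro w w' hsub
      have h1 : μ (S w) ≤ μ (S w') + μ T := by
        calc μ (S w) ≤ μ (S w' ∪ (S w \ S w')) := measure_mono (by
          intro z hz
          by_cases h : z ∈ S w'
          · exact Or.inl h
          · exact Or.inr ⟨hz, h⟩)
          _ ≤ μ (S w') + μ (S w \ S w') := measure_union_le _ _
          _ ≤ μ (S w') + μ T := by
              apply add_le_add_right
              exact measure_mono hsub
      calc (μ (S w)).toReal ≤ (μ (S w') + μ T).toReal := ENNReal.toReal_mono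
            (ENNReal.add_ne_top.mpr ⟨measure_ne_top _ _, measure_ne_top _ _⟩) h1
        _ = (μ (S w')).toReal + (μ T).toReal :=
            ENNReal.toReal_add (measure_ne_top _ _) (measure_ne_top _ _)
    rw [abs_sub_le_iff]
    constructor
    · have := key y y' hsub1; rw [← hP, ← hP'] at this; linarith
    · have := key y' y hsub2; rw [← hP, ← hP'] at this; linarith
  -- conclude
  have hlog : |truncLogProb η₁ x y k - truncLogProb η₁ x y' k| ≤ |P - P'| / η₁ := by
    have : truncLogProb η₁ x y k = Real.log (max P η₁) := by rw [truncLogProb]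
    rw [this]
    have : truncLogProb η₁ x y' k = Real.log (max P' η₁) := by rw [truncLogProb]
    rw [this]
    exact log_max_lip hη₁ P P'
  calc |truncLogProb η₁ x y k - truncLogProb η₁ x y' k| ≤ |P - P'| / η₁ := hlog
    _ ≤ (|y j - c| / η) / η₁ := by
        exact (div_le_div_iff_of_pos_right hη₁).mpr habs
    _ ≤ 2 * |y j - c| / (η * η₁) := by
        rw [div_div]
        rw [div_le_div_iff₀ (by positivity) (by positivity)]
        nlinarith [abs_nonneg (y j - c), mul_pos hη hη₁]
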